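/- arXiv:math/0209082 — 2 statements merged into one kernel-verified Lean document; each statement's English description precedes it below -/
import Mathlib

section
/- If b = (v, y) ∈ W is self-dual, then ε_0(b) = 2·y_1 − min(y_1, v_1), where ε_0(b) = max{k : e_0^k b is defined} is computed using the tensor-product rule on W. -/
/- STATEMENT 10: for self-dual b, ε₀(b) = 2·y₁ − min(y₁, v₁). -/

namespace Stmt10

/-- An element of `W = B^{2n-1,s} ⊗ B^{1,s}` of type `A_{2n-1}^{(1)}`: a pair `b = (v, y)`. -/
abbrev V2 := (ℕ → ℕ) × (ℕ → ℕ)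

/-- Iterate a partial operator `k` times. -/
def iterO {α : Type*} (g : α → Option α) : ℕ → α → Option α
  | 0, a => some a
  | k+1, a => (g a).bind (iterO g k)

/-- `max {k : g^k a is defined}`. -/
noncomputable def strM {α : Type*} (g : α → Option α) (a : α) : ℕ :=
  sSup {k | (iterO g k a).isSome = true}

/-- The partial operator `e_i` on `B^{1,s}` (the `y`-side), `0 ≤ i ≤ 2n-1`. -/
def eY (n i : ℕ) (y : ℕ → ℕ) : Option (ℕ → ℕ) :=
  if i = 0 then
    if y 1 > 0 then
      some (Function.update (Function.update y 1 (y 1 - 1)) (2*n) (y (2*n) + 1))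
    else none
  else if 1 ≤ i ∧ i ≤ 2*n - 1 then
    if y (i+1) > 0 then
      some (Function.update (Function.update y i (y i + 1)) (i+1) (y (i+1) - 1))
    else none
  else none

/-- The partial operator `f_i` on `B^{1,s}`, the partial inverse of `e_i`. -/
def fY (n i : ℕ) (y : ℕ → ℕ) : Option (ℕ → ℕ) :=
  if i = 0 then
    if y (2*n) > 0 then
      some (Function.update (Function.update y 1 (y 1 + 1)) (2*n) (y (2*n) - 1))
    else none
  else if 1 ≤ i ∧ i ≤ 2*n - 1 then
    if y i > 0 then
      some (Function.update (Function.update y i (y i - 1)) (i+1) (y (i+1) + 1))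
    else none
  else none

/-- The partial operator `e_i` on `B^{2n-1,s}` (the `v`-side), `0 ≤ i ≤ 2n-1`. -/
def eV (n i : ℕ) (v : ℕ → ℕ) : Option (ℕ → ℕ) :=
  if i = 0 then
    if v (2*n) > 0 then
      some (Function.update (Function.update v (2*n) (v (2*n) - 1)) 1 (v 1 + 1))
    else none
  else if 1 ≤ i ∧ i ≤ 2*n - 1 then
    if v (2*n - i) > 0 then
      some (Function.update (Function.update v (2*n - i) (v (2*n - i) - 1))
              (2*n + 1 - i) (v (2*n + 1 - i) + 1))
    else none
  else none

/-- The partial operator `f_i` on `B^{2n-1,s}`, the partial inverse of `e_i`. -/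
def fV (n i : ℕ) (v : ℕ → ℕ) : Option (ℕ → ℕ) :=
  if i = 0 then
    if v 1 > 0 then
      some (Function.update (Function.update v (2*n) (v (2*n) + 1)) 1 (v 1 - 1))
    else none
  else if 1 ≤ i ∧ i ≤ 2*n - 1 then
    if v (2*n + 1 - i) > 0 then
      some (Function.update (Function.update v (2*n - i) (v (2*n - i) + 1))
              (2*n + 1 - i) (v (2*n + 1 - i) - 1))
    else none
  else none

/-- `ε_i` on the first tensor factor. -/
noncomputable def epsV (n i : ℕ) (v : ℕ → ℕ) : ℕ := strM (eV n i) v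
/-- `φ_i` on the second tensor factor. -/
noncomputable def phiY (n i : ℕ) (y : ℕ → ℕ) : ℕ := strM (fY n i) y

/-- The tensor product rule for `e_i` on `W = B^{2n-1,s} ⊗ B^{1,s}`, `b = (v, y)`. -/
noncomputable def eW (n i : ℕ) (b : V2) : Option V2 :=
  if epsV n i b.1 > phiY n i b.2 then (eV n i b.1).map (fun v' => (v', b.2))
  else (eY n i b.2).map (fun y' => (b.1, y'))

/-- The (dual) tensor product rule for `f_i` on `W`. -/
noncomputable def fW (n i : ℕ) (b : V2) : Option V2 :=
  if epsV n i b.1 ≥ phiY n i b.2 then (fV n i b.1).map (fun v' => (v', b.2))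
  else (fY n i b.2).map (fun y' => (b.1, y'))

/-- `ε_i` on `W`. -/
noncomputable def epsW (n i : ℕ) (b : V2) : ℕ := strM (eW n i) b
/-- `φ_i` on `W`. -/
noncomputable def phiW (n i : ℕ) (b : V2) : ℕ := strM (fW n i) b

/-- Membership in `W = B^{2n-1,s} ⊗ B^{1,s}`. -/
def Wmem (n s : ℕ) (b : V2) : Prop :=
  (∑ i ∈ Finset.Icc 1 (2*n), b.1 i) = s ∧ (∑ i ∈ Finset.Icc 1 (2*n), b.2 i) = s ∧
  (∀ i, b.1 i ≠ 0 → 1 ≤ i ∧ i ≤ 2*n) ∧ (∀ i, b.2 i ≠ 0 → 1 ≤ i ∧ i ≤ 2*n)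

/-- `y_i` with the convention `y_{2n+1} := y_1`. -/
def yc (n : ℕ) (b : V2) (i : ℕ) : ℕ := if i = 2*n+1 then b.2 1 else b.2 i
/-- `v_i` with the convention `v_{2n+1} := v_1`. -/
def vc (n : ℕ) (b : V2) (i : ℕ) : ℕ := if i = 2*n+1 then b.1 1 else b.1 i

/-- The self-duality condition `b^{∨*} = R(b)` in coordinates. -/
def selfDual (n : ℕ) (b : V2) : Prop :=
  ∀ i, 1 ≤ i → i ≤ 2*n →
    b.2 (2*n+1-i) = b.1 i - min (b.2 i) (b.1 i) + min (yc n b (i+1)) (vc n b (i+1)) ∧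
    b.1 (2*n+1-i) = b.2 i - min (b.2 i) (b.1 i) + min (yc n b (i+1)) (vc n b (i+1))

/-- The element `u = u(Ŵ^{1,s})` with `v_{2n} = s`, `y_1 = s`. -/
def uW (n s : ℕ) : V2 :=
  (fun i => if i = 2*n then s else 0, fun i => if i = 1 then s else 0)

-- core end

lemma strM_eq_of_iff {α : Type*} {g : α → Option α} {a : α} {N : ℕ}
    (h : ∀ k, (iterO g k a).isSome = true ↔ k ≤ N) : strM g a = N := by
  have hs : {k | (iterO g k a).isSome = true} = Set.Iic N := Set.ext fun k => h k
  rw [strM, hs, csSup_Iic]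

lemma iterO_eV0 (n : ℕ) : ∀ (k : ℕ) (v : ℕ → ℕ),
    (iterO (eV n 0) k v).isSome = true ↔ k ≤ v (2*n) := by
  intro k
  induction k with
  | zero => intro v; simp [iterO]
  | succ k ih =>
    intro v
    rw [iterO]
    by_cases h : 0 < v (2*n)
    · have he : eV n 0 v =
        some (Function.update (Function.update v (2*n) (v (2*n) - 1)) 1 (v 1 + 1)) := by
        simp [eV, h]
      rw [he, Option.bind_some, ih,
        Function.update_of_ne (by omega : (2*n : ℕ) ≠ 1), Function.update_self]
      omega
    · have he : eV n 0 v = none := by simp [eV, h]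
      rw [he]
      simp only [Option.bind_none, Option.isSome_none, Bool.false_eq_true, false_iff]
      omega

lemma iterO_fY0 (n : ℕ) : ∀ (k : ℕ) (y : ℕ → ℕ),
    (iterO (fY n 0) k y).isSome = true ↔ k ≤ y (2*n) := by
  intro k
  induction k with
  | zero => intro y; simp [iterO]
  | succ k ih =>
    intro y
    rw [iterO]
    by_cases h : 0 < y (2*n)
    · have he : fY n 0 y =
        some (Function.update (Function.update y 1 (y 1 + 1)) (2*n) (y (2*n) - 1)) := by
        simp [fY, h]
      rw [he, Option.bind_some, ih, Function.update_self]
      omega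
    · have he : fY n 0 y = none := by simp [fY, h]
      rw [he]
      simp only [Option.bind_none, Option.isSome_none, Bool.false_eq_true, false_iff]
      omega

lemma epsV0 (n : ℕ) (v : ℕ → ℕ) : epsV n 0 v = v (2*n) :=
  strM_eq_of_iff (fun k => iterO_eV0 n k v)

lemma phiY0 (n : ℕ) (y : ℕ → ℕ) : phiY n 0 y = y (2*n) :=
  strM_eq_of_iff (fun k => iterO_fY0 n k y)

lemma iterO_eW0 (n : ℕ) : ∀ (k : ℕ) (b : V2),
    (iterO (eW n 0) k b).isSome = true ↔ k ≤ b.2 1 + (b.1 (2*n) - b.2 (2*n)) := by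
  intro k
  induction k with
  | zero => intro b; simp [iterO]
  | succ k ih =>
    intro b
    rw [iterO]
    by_cases hvy : b.2 (2*n) < b.1 (2*n)
    · -- act on the v-side
      have hv : 0 < b.1 (2*n) := by omega
      have he : eW n 0 b =
          some (Function.update (Function.update b.1 (2*n) (b.1 (2*n) - 1)) 1 (b.1 1 + 1), b.2) := by
        rw [eW, epsV0, phiY0, if_pos hvy]
        simp [eV, hv]
      rw [he, Option.bind_some, ih]
      dsimp only
      rw [Function.update_of_ne (by omega : (2*n : ℕ) ≠ 1), Function.update_self]
      omega
    · -- act on the y-side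
      by_cases hy : 0 < b.2 1
      · have he : eW n 0 b =
            some (b.1, Function.update (Function.update b.2 1 (b.2 1 - 1)) (2*n) (b.2 (2*n) + 1)) := by
          rw [eW, epsV0, phiY0, if_neg (by omega)]
          simp [eY, hy]
        rw [he, Option.bind_some, ih]
        dsimp only
        rw [Function.update_self,
          Function.update_of_ne (by omega : (1 : ℕ) ≠ 2*n), Function.update_self]
        omega
      · have he : eW n 0 b = none := by
          rw [eW, epsV0, phiY0, if_neg (by omega)]
          simp [eY, hy]
        rw [he]
        simp only [Option.bind_none, Option.isSome_none, Bool.false_eq_true, false_iff]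
        omega


theorem statement10 (n s : ℕ) (hn : 2 ≤ n) (hs : 1 ≤ s) (b : V2)
    (hb : Wmem n s b) (hsd : selfDual n b) :
    epsW n 0 b = 2 * b.2 1 - min (b.2 1) (b.1 1) := by
  have heps : epsW n 0 b = b.2 1 + (b.1 (2*n) - b.2 (2*n)) :=
    strM_eq_of_iff (fun k => iterO_eW0 n k b)
  obtain ⟨h1, h2⟩ := hsd (2*n) (by omega) le_rfl
  have hi : 2*n+1-2*n = 1 := by omega
  rw [hi] at h1 h2
  rw [yc, vc, if_pos rfl, if_pos rfl] at h1 h2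
  rw [heps]
  omega

end Stmt10
end

section
/- The map sending a rigged configuration (m, J) ∈ RC_C(L, λ) to (m̂, Ĵ) defined by m̂_i^{(a)} = m̂_i^{(2n−a)} = m_i^{(a)} and Ĵ^{(a,i)} = Ĵ^{(2n−a,i)} = J^{(a,i)} for 1 ≤ a ≤ n−1 and all i ≥ 1, m̂_{2i}^{(n)} = m_i^{(n)} and m̂_j^{(n)} = 0 for odd j, and Ĵ^{(n,2i)} = the partition obtained from J^{(n,i)} by doubling every part, is a bijection from RC_C(L, λ) onto RC^v(L, λ); moreover under this map the cocharge satisfies cc(m̂, Ĵ) = 2·cc(m, J). -/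
/- STATEMENT 15: the bijection RC_C(L,λ) → RC^v(L,λ) doubling the middle row data,
   under which the cocharge doubles. -/

namespace Stmt15

/-- A finitely supported matrix `(m_i^{(a)})`, indexed by pairs `(a, i)`. -/
abbrev Mat := ℕ × ℕ →₀ ℕ
/-- A finitely supported matrix of partitions `(J^{(a,i)})`, each partition encoded as the
multiset of its parts. -/
abbrev Rig := ℕ × ℕ →₀ Multiset ℕ

/-- Support is contained in `{1,…,N} × {1,2,3,…}`. -/
def supIn (N : ℕ) (m : Mat) : Prop := ∀ q, m q ≠ 0 → 1 ≤ q.1 ∧ q.1 ≤ N ∧ 1 ≤ q.2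
/-- Support is contained in `{1,…,N} × {1,2,3,…}`. -/
def supInJ (N : ℕ) (J : Rig) : Prop := ∀ q, J q ≠ 0 → 1 ≤ q.1 ∧ q.1 ≤ N ∧ 1 ≤ q.2

/-- The normalized bilinear form `(α_a|α_b)` of type `C_n`. -/
def formC (n a b : ℕ) : ℚ :=
  if a = b then (if a = n then 2 else 1)
  else if a + 1 = b ∨ b + 1 = a then (if a = n ∨ b = n then -1 else -(1/2))
  else 0

/-- The scaling factors `t_a` of type `C_n`. -/
def tC (n a : ℕ) : ℕ := if a = n then 1 else 2

/-- The Cartan integers `A_{ab} = 2(α_a|α_b)/(α_a|α_a)` of type `C_n`. -/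
def cartanC (n a b : ℕ) : ℚ := 2 * formC n a b / formC n a a

/-- The bilinear form `(α_a|α_b) = 2δ_{ab} - δ_{|a-b|,1}` of type `A_{2n-1}`
(equal to its Cartan matrix; all scaling factors are 1). -/
def formA (a b : ℕ) : ℚ :=
  if a = b then 2 else if a + 1 = b ∨ b + 1 = a then -1 else 0

/-- The type `C_n` configuration condition for the data `(L, λ)`. -/
def configC (n : ℕ) (lam : ℕ → ℕ) (L m : Mat) : Prop :=
  ∀ a, 1 ≤ a → a ≤ n →
    (m.sum fun q c => (q.2 : ℚ) * c * cartanC n a q.1)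
      = (L.sum fun q c => if q.1 = a then (q.2 : ℚ) * c else 0) - lam a

/-- The type `C_n` vacancy numbers `p_i^{(a)}`. -/
def vacC (n : ℕ) (L m : Mat) (a i : ℕ) : ℚ :=
  (L.sum fun q c => if q.1 = a then ((min i q.2 : ℕ) : ℚ) * c else 0)
  - (m.sum fun q c => formC n a q.1 * ((min (tC n q.1 * i) (tC n a * q.2) : ℕ) : ℚ) * c)

/-- Admissibility in type `C_n`: all vacancy numbers are nonnegative. -/
def admC (n : ℕ) (L m : Mat) : Prop :=
  ∀ a i, 1 ≤ a → a ≤ n → 1 ≤ i → 0 ≤ vacC n L m a i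

/-- The rigging conditions in type `C_n`: `J^{(a,i)}` is a partition contained in an
`m_i^{(a)} × p_i^{(a)}` rectangle. -/
def rigC (n : ℕ) (L m : Mat) (J : Rig) : Prop :=
  ∀ a i, 1 ≤ a → a ≤ n → 1 ≤ i →
    (J (a,i)).card ≤ m (a,i) ∧ ∀ x ∈ J (a,i), 0 < x ∧ (x : ℚ) ≤ vacC n L m a i

/-- The quadratic part of the type `C_n` cocharge. -/
def ccC (n : ℕ) (m : Mat) : ℚ :=
  (1/2) * m.sum fun q c => m.sum fun r d =>
    formC n q.1 r.1 * ((min (tC n r.1 * q.2) (tC n q.1 * r.2) : ℕ) : ℚ) * c * d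

/-- `Σ_{a,i} |J^{(a,i)}|`. -/
def Jsize (J : Rig) : ℚ := J.sum fun _ ms => (ms.sum : ℚ)

/-- The set of type `C_n` rigged configurations for the data `(L, λ)`. -/
def RCC (n : ℕ) (lam : ℕ → ℕ) (L : Mat) : Set (Mat × Rig) :=
  {p | supIn n p.1 ∧ supInJ n p.2 ∧ configC n lam L p.1 ∧ admC n L p.1 ∧
       rigC n L p.1 p.2}

/-- The type `A_{2n-1}` configuration condition (index set `{1,…,N}` with `N = 2n-1`). -/
def configA (N : ℕ) (lam : ℕ → ℚ) (L m : Mat) : Prop :=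
  ∀ a, 1 ≤ a → a ≤ N →
    (m.sum fun q c => (q.2 : ℚ) * c * formA a q.1)
      = (L.sum fun q c => if q.1 = a then (q.2 : ℚ) * c else 0) - lam a

/-- The type `A_{2n-1}` vacancy numbers (all scaling factors are 1). -/
def vacA (L m : Mat) (a i : ℕ) : ℚ :=
  (L.sum fun q c => if q.1 = a then ((min i q.2 : ℕ) : ℚ) * c else 0)
  - (m.sum fun q c => formA a q.1 * ((min i q.2 : ℕ) : ℚ) * c)

/-- Admissibility in type `A_{2n-1}`. -/
def admA (N : ℕ) (L m : Mat) : Prop :=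
  ∀ a i, 1 ≤ a → a ≤ N → 1 ≤ i → 0 ≤ vacA L m a i

/-- The rigging conditions in type `A_{2n-1}`. -/
def rigA (N : ℕ) (L m : Mat) (J : Rig) : Prop :=
  ∀ a i, 1 ≤ a → a ≤ N → 1 ≤ i →
    (J (a,i)).card ≤ m (a,i) ∧ ∀ x ∈ J (a,i), 0 < x ∧ (x : ℚ) ≤ vacA L m a i

/-- The quadratic part of the type `A_{2n-1}` cocharge. -/
def ccA (m : Mat) : ℚ :=
  (1/2) * m.sum fun q c => m.sum fun r d =>
    formA q.1 r.1 * ((min q.2 r.2 : ℕ) : ℚ) * c * d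

/-- The transform `m ↦ m̂`: `m̂_i^{(a)} = m̂_i^{(2n-a)} = m_i^{(a)}` for `a ≤ n-1`,
`m̂_{2i}^{(n)} = m_i^{(n)}` and `m̂_j^{(n)} = 0` for odd `j`. -/
noncomputable def hatM (n : ℕ) (m : Mat) : Mat :=
  Finsupp.onFinset
    (Finset.range (2*n+1) ×ˢ Finset.range (2 * (m.support.sup Prod.snd) + 1))
    (fun q =>
      if 1 ≤ q.1 ∧ q.1 ≤ n - 1 then m q
      else if q.1 = n ∧ q.2 % 2 = 0 then m (n, q.2 / 2)
      else if n + 1 ≤ q.1 ∧ q.1 ≤ 2*n - 1 then m (2*n - q.1, q.2)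
      else 0)
    (by
      intro q hq
      obtain ⟨a, i⟩ := q
      simp only [Finset.mem_product, Finset.mem_range]
      dsimp only at hq
      split_ifs at hq with h1 h2 h3
      · have hs : ((a, i) : ℕ × ℕ) ∈ m.support := Finsupp.mem_support_iff.2 hq
        have hle : i ≤ m.support.sup Prod.snd := Finset.le_sup (f := Prod.snd) hs
        omega
      · have hs : ((n, i / 2) : ℕ × ℕ) ∈ m.support := Finsupp.mem_support_iff.2 hq
        have hle : i / 2 ≤ m.support.sup Prod.snd := Finset.le_sup (f := Prod.snd) hs
        omega
      · have hs : ((2*n - a, i) : ℕ × ℕ) ∈ m.support := Finsupp.mem_support_iff.2 hq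
        have hle : i ≤ m.support.sup Prod.snd := Finset.le_sup (f := Prod.snd) hs
        omega
      · exact absurd rfl hq)

/-- The transform `J ↦ Ĵ`: `Ĵ^{(a,i)} = Ĵ^{(2n-a,i)} = J^{(a,i)}` for `a ≤ n-1`, and
`Ĵ^{(n,2i)}` is obtained from `J^{(n,i)}` by doubling every part. -/
noncomputable def hatJ (n : ℕ) (J : Rig) : Rig :=
  Finsupp.onFinset
    (Finset.range (2*n+1) ×ˢ Finset.range (2 * (J.support.sup Prod.snd) + 1))
    (fun q =>
      if 1 ≤ q.1 ∧ q.1 ≤ n - 1 then J q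
      else if q.1 = n ∧ q.2 % 2 = 0 then (J (n, q.2 / 2)).map (fun x => 2 * x)
      else if n + 1 ≤ q.1 ∧ q.1 ≤ 2*n - 1 then J (2*n - q.1, q.2)
      else 0)
    (by
      intro q hq
      obtain ⟨a, i⟩ := q
      simp only [Finset.mem_product, Finset.mem_range]
      dsimp only at hq
      split_ifs at hq with h1 h2 h3
      · have hs : ((a, i) : ℕ × ℕ) ∈ J.support := Finsupp.mem_support_iff.2 hq
        have hle : i ≤ J.support.sup Prod.snd := Finset.le_sup (f := Prod.snd) hs
        omega
      · rw [Ne, Multiset.map_eq_zero] at hq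
        have hs : ((n, i / 2) : ℕ × ℕ) ∈ J.support := Finsupp.mem_support_iff.2 hq
        have hle : i / 2 ≤ J.support.sup Prod.snd := Finset.le_sup (f := Prod.snd) hs
        omega
      · have hs : ((2*n - a, i) : ℕ × ℕ) ∈ J.support := Finsupp.mem_support_iff.2 hq
        have hle : i ≤ J.support.sup Prod.snd := Finset.le_sup (f := Prod.snd) hs
        omega
      · exact absurd rfl hq)

/-- The weight `λ̂`: `λ̂_a = λ̂_{2n-a} = λ_a` for `a ≤ n-1`, `λ̂_n = 2λ_n`. -/
def hatLam (n : ℕ) (lam : ℕ → ℕ) (a : ℕ) : ℚ :=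
  if 1 ≤ a ∧ a ≤ n - 1 then lam a
  else if a = n then 2 * lam n
  else if n + 1 ≤ a ∧ a ≤ 2*n - 1 then lam (2*n - a)
  else 0

/-- The set `RC^v(L, λ)` of symmetric type `A_{2n-1}` rigged configurations for the
data `(L̂, λ̂)`. -/
def RCv (n : ℕ) (lam : ℕ → ℕ) (L : Mat) : Set (Mat × Rig) :=
  {p | supIn (2*n-1) p.1 ∧ supInJ (2*n-1) p.2 ∧
       configA (2*n-1) (hatLam n lam) (hatM n L) p.1 ∧
       admA (2*n-1) (hatM n L) p.1 ∧
       rigA (2*n-1) (hatM n L) p.1 p.2 ∧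
       (∀ a i, 1 ≤ a → a ≤ n - 1 → p.1 (a, i) = p.1 (2*n - a, i) ∧
          p.2 (a, i) = p.2 (2*n - a, i)) ∧
       (∀ j, j % 2 = 1 → p.1 (n, j) = 0) ∧
       (∀ i, ∀ x ∈ p.2 (n, i), x % 2 = 0)}

-- core end

section Helpers
variable {n : ℕ}

lemma hatM_apply (m : Mat) (q : ℕ × ℕ) :
    hatM n m q = (if 1 ≤ q.1 ∧ q.1 ≤ n - 1 then m q
      else if q.1 = n ∧ q.2 % 2 = 0 then m (n, q.2 / 2)
      else if n + 1 ≤ q.1 ∧ q.1 ≤ 2*n - 1 then m (2*n - q.1, q.2)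
      else 0) := rfl

lemma hatJ_apply (J : Rig) (q : ℕ × ℕ) :
    hatJ n J q = (if 1 ≤ q.1 ∧ q.1 ≤ n - 1 then J q
      else if q.1 = n ∧ q.2 % 2 = 0 then (J (n, q.2 / 2)).map (fun x => 2 * x)
      else if n + 1 ≤ q.1 ∧ q.1 ≤ 2*n - 1 then J (2*n - q.1, q.2)
      else 0) := rfl

lemma hatM_low (m : Mat) {a : ℕ} (i : ℕ) (h1 : 1 ≤ a) (h2 : a ≤ n - 1) :
    hatM n m (a, i) = m (a, i) := by
  rw [hatM_apply]; exact if_pos ⟨h1, h2⟩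

lemma hatM_mid (hn : 2 ≤ n) (m : Mat) (i : ℕ) : hatM n m (n, 2*i) = m (n, i) := by
  rw [hatM_apply, if_neg (by omega), if_pos ⟨rfl, by omega⟩]
  congr 1
  exact Prod.ext rfl (by omega)

lemma hatM_midodd (hn : 2 ≤ n) (m : Mat) {j : ℕ} (hj : j % 2 = 1) :
    hatM n m (n, j) = 0 := by
  rw [hatM_apply, if_neg (by omega), if_neg (by omega), if_neg (by omega)]

lemma hatM_high (hn : 2 ≤ n) (m : Mat) {a : ℕ} (i : ℕ) (h1 : n + 1 ≤ a) (h2 : a ≤ 2*n - 1) :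
    hatM n m (a, i) = m (2*n - a, i) := by
  rw [hatM_apply, if_neg (by omega), if_neg (by omega), if_pos ⟨h1, h2⟩]

lemma hatJ_low (J : Rig) {a : ℕ} (i : ℕ) (h1 : 1 ≤ a) (h2 : a ≤ n - 1) :
    hatJ n J (a, i) = J (a, i) := by
  rw [hatJ_apply]; exact if_pos ⟨h1, h2⟩

lemma hatJ_mid (hn : 2 ≤ n) (J : Rig) (i : ℕ) :
    hatJ n J (n, 2*i) = (J (n, i)).map (fun x => 2 * x) := by
  rw [hatJ_apply, if_neg (by omega), if_pos ⟨rfl, by omega⟩]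
  congr 2
  exact Prod.ext rfl (by omega)

lemma hatJ_midodd (hn : 2 ≤ n) (J : Rig) {j : ℕ} (hj : j % 2 = 1) :
    hatJ n J (n, j) = 0 := by
  rw [hatJ_apply, if_neg (by omega), if_neg (by omega), if_neg (by omega)]

lemma hatJ_high (hn : 2 ≤ n) (J : Rig) {a : ℕ} (i : ℕ) (h1 : n + 1 ≤ a) (h2 : a ≤ 2*n - 1) :
    hatJ n J (a, i) = J (2*n - a, i) := by
  rw [hatJ_apply, if_neg (by omega), if_neg (by omega), if_pos ⟨h1, h2⟩]

lemma sum_hatM (hn : 2 ≤ n) (m : Mat) (hm : supIn n m) (f : ℕ × ℕ → ℕ → ℚ)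
    (hf : ∀ q, f q 0 = 0) :
    (hatM n m).sum f
      = m.sum (fun q c => if q.1 = n then f (n, 2*q.2) c
          else f q c + f (2*n - q.1, q.2) c) := by
  classical
  set S1 := m.support.filter (fun q => q.1 ≠ n) with hS1
  set S2 := m.support.filter (fun q => q.1 = n) with hS2
  have hmemS1 : ∀ q ∈ S1, 1 ≤ q.1 ∧ q.1 ≤ n - 1 ∧ 1 ≤ q.2 := by
    intro q hq
    rw [hS1, Finset.mem_filter] at hq
    obtain ⟨h1, h2, h3⟩ := hm q (Finsupp.mem_support_iff.1 hq.1)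
    exact ⟨h1, by omega, h3⟩
  have hmemS2 : ∀ q ∈ S2, q.1 = n := fun q hq => (Finset.mem_filter.1 hq).2
  have hsub : (hatM n m).support ⊆
      (S1 ∪ S1.image (fun q => (2*n - q.1, q.2))) ∪ S2.image (fun q => (n, 2*q.2)) := by
    intro q hq
    obtain ⟨a, i⟩ := q
    have hq' := Finsupp.mem_support_iff.1 hq
    rw [hatM_apply] at hq'
    dsimp only at hq'
    split_ifs at hq' with h1 h2 h3
    · exact Finset.mem_union_left _ (Finset.mem_union_left _
        (Finset.mem_filter.2 ⟨Finsupp.mem_support_iff.2 hq', by omega⟩))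
    · refine Finset.mem_union_right _ (Finset.mem_image.2
        ⟨(n, i/2), Finset.mem_filter.2 ⟨Finsupp.mem_support_iff.2 hq', rfl⟩, ?_⟩)
      exact Prod.ext h2.1.symm (by omega)
    · refine Finset.mem_union_left _ (Finset.mem_union_right _ (Finset.mem_image.2
        ⟨(2*n - a, i), Finset.mem_filter.2 ⟨Finsupp.mem_support_iff.2 hq', by omega⟩, ?_⟩))
      exact Prod.ext (by omega) rfl
    · exact absurd rfl hq'
  rw [Finsupp.sum_of_support_subset _ hsub f (fun q _ => hf q)]
  have hdisj1 : Disjoint S1 (S1.image (fun q => (2*n - q.1, q.2))) := by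
    rw [Finset.disjoint_left]
    intro q hq hq'
    obtain ⟨r, hr, hrq⟩ := Finset.mem_image.1 hq'
    have h1 := hmemS1 q hq
    have h2 := hmemS1 r hr
    have : (2*n - r.1, r.2).1 = q.1 := by rw [hrq]
    simp only at this
    omega
  have hdisj2 : Disjoint (S1 ∪ S1.image (fun q => (2*n - q.1, q.2)))
      (S2.image (fun q => (n, 2*q.2))) := by
    rw [Finset.disjoint_left]
    intro q hq hq'
    obtain ⟨r, hr, hrq⟩ := Finset.mem_image.1 hq'
    have hq1 : q.1 = n := by rw [← hrq]
    rcases Finset.mem_union.1 hq with h | h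
    · have := hmemS1 q h; omega
    · obtain ⟨s, hs, hsq⟩ := Finset.mem_image.1 h
      have h2 := hmemS1 s hs
      have : (2*n - s.1, s.2).1 = q.1 := by rw [hsq]
      simp only at this
      omega
  rw [Finset.sum_union hdisj2, Finset.sum_union hdisj1]
  rw [Finset.sum_image (fun x hx y hy hxy => by
    have h1 := hmemS1 x hx; have h2 := hmemS1 y hy
    rw [Prod.ext_iff] at hxy; simp only at hxy
    exact Prod.ext (by omega) hxy.2)]
  rw [Finset.sum_image (fun x hx y hy hxy => by
    have h1 := hmemS2 x hx; have h2 := hmemS2 y hy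
    rw [Prod.ext_iff] at hxy; simp only at hxy
    exact Prod.ext (h1.trans h2.symm) (by omega))]
  have e1 : ∀ q ∈ S1, f q (hatM n m q) = f q (m q) := by
    intro q hq
    have h1 := hmemS1 q hq
    rw [show q = (q.1, q.2) from rfl, hatM_low m q.2 h1.1 h1.2.1]
  have e2 : ∀ q ∈ S1, f (2*n - q.1, q.2) (hatM n m (2*n - q.1, q.2))
      = f (2*n - q.1, q.2) (m q) := by
    intro q hq
    have h1 := hmemS1 q hq
    have hq1 : (2*n - (2*n - q.1), q.2) = q := Prod.ext (by omega) rfl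
    rw [hatM_high hn m (a := 2*n - q.1) q.2 (by omega) (by omega), hq1]
  have e3 : ∀ q ∈ S2, f (n, 2*q.2) (hatM n m (n, 2*q.2)) = f (n, 2*q.2) (m q) := by
    intro q hq
    have hq1 : ((n : ℕ), q.2) = q := Prod.ext (hmemS2 q hq).symm rfl
    rw [hatM_mid hn m q.2, hq1]
  rw [Finset.sum_congr rfl e1, Finset.sum_congr rfl e2, Finset.sum_congr rfl e3]
  rw [Finsupp.sum, ← Finset.sum_filter_add_sum_filter_not m.support (fun q => q.1 = n)]
  rw [Finset.sum_congr rfl (g := fun q => f (n, 2*q.2) (m q))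
    (fun q hq => if_pos (hmemS2 q hq))]
  rw [Finset.sum_congr rfl (g := fun q => f q (m q) + f (2*n - q.1, q.2) (m q))
    (fun q hq => if_neg (Finset.mem_filter.1 hq).2)]
  rw [Finset.sum_add_distrib]
  ring

lemma sum_hatJ (hn : 2 ≤ n) (J : Rig) (hJ : supInJ n J) (f : ℕ × ℕ → Multiset ℕ → ℚ)
    (hf : ∀ q, f q 0 = 0) :
    (hatJ n J).sum f
      = J.sum (fun q ms => if q.1 = n then f (n, 2*q.2) (ms.map (fun x => 2 * x))
          else f q ms + f (2*n - q.1, q.2) ms) := by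
  classical
  set S1 := J.support.filter (fun q => q.1 ≠ n) with hS1
  set S2 := J.support.filter (fun q => q.1 = n) with hS2
  have hmemS1 : ∀ q ∈ S1, 1 ≤ q.1 ∧ q.1 ≤ n - 1 ∧ 1 ≤ q.2 := by
    intro q hq
    rw [hS1, Finset.mem_filter] at hq
    obtain ⟨h1, h2, h3⟩ := hJ q (Finsupp.mem_support_iff.1 hq.1)
    exact ⟨h1, by omega, h3⟩
  have hmemS2 : ∀ q ∈ S2, q.1 = n := fun q hq => (Finset.mem_filter.1 hq).2
  have hsub : (hatJ n J).support ⊆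
      (S1 ∪ S1.image (fun q => (2*n - q.1, q.2))) ∪ S2.image (fun q => (n, 2*q.2)) := by
    intro q hq
    obtain ⟨a, i⟩ := q
    have hq' := Finsupp.mem_support_iff.1 hq
    rw [hatJ_apply] at hq'
    dsimp only at hq'
    split_ifs at hq' with h1 h2 h3
    · exact Finset.mem_union_left _ (Finset.mem_union_left _
        (Finset.mem_filter.2 ⟨Finsupp.mem_support_iff.2 hq', by omega⟩))
    · rw [Ne, Multiset.map_eq_zero] at hq'
      refine Finset.mem_union_right _ (Finset.mem_image.2
        ⟨(n, i/2), Finset.mem_filter.2 ⟨Finsupp.mem_support_iff.2 hq', rfl⟩, ?_⟩)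
      exact Prod.ext h2.1.symm (by omega)
    · refine Finset.mem_union_left _ (Finset.mem_union_right _ (Finset.mem_image.2
        ⟨(2*n - a, i), Finset.mem_filter.2 ⟨Finsupp.mem_support_iff.2 hq', by omega⟩, ?_⟩))
      exact Prod.ext (by omega) rfl
    · exact absurd rfl hq'
  rw [Finsupp.sum_of_support_subset _ hsub f (fun q _ => hf q)]
  have hdisj1 : Disjoint S1 (S1.image (fun q => (2*n - q.1, q.2))) := by
    rw [Finset.disjoint_left]
    intro q hq hq'
    obtain ⟨r, hr, hrq⟩ := Finset.mem_image.1 hq'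
    have h1 := hmemS1 q hq
    have h2 := hmemS1 r hr
    have : (2*n - r.1, r.2).1 = q.1 := by rw [hrq]
    simp only at this
    omega
  have hdisj2 : Disjoint (S1 ∪ S1.image (fun q => (2*n - q.1, q.2)))
      (S2.image (fun q => (n, 2*q.2))) := by
    rw [Finset.disjoint_left]
    intro q hq hq'
    obtain ⟨r, hr, hrq⟩ := Finset.mem_image.1 hq'
    have hq1 : q.1 = n := by rw [← hrq]
    rcases Finset.mem_union.1 hq with h | h
    · have := hmemS1 q h; omega
    · obtain ⟨s, hs, hsq⟩ := Finset.mem_image.1 h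
      have h2 := hmemS1 s hs
      have : (2*n - s.1, s.2).1 = q.1 := by rw [hsq]
      simp only at this
      omega
  rw [Finset.sum_union hdisj2, Finset.sum_union hdisj1]
  rw [Finset.sum_image (fun x hx y hy hxy => by
    have h1 := hmemS1 x hx; have h2 := hmemS1 y hy
    rw [Prod.ext_iff] at hxy; simp only at hxy
    exact Prod.ext (by omega) hxy.2)]
  rw [Finset.sum_image (fun x hx y hy hxy => by
    have h1 := hmemS2 x hx; have h2 := hmemS2 y hy
    rw [Prod.ext_iff] at hxy; simp only at hxy
    exact Prod.ext (h1.trans h2.symm) (by omega))]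
  have e1 : ∀ q ∈ S1, f q (hatJ n J q) = f q (J q) := by
    intro q hq
    have h1 := hmemS1 q hq
    rw [show q = (q.1, q.2) from rfl, hatJ_low J q.2 h1.1 h1.2.1]
  have e2 : ∀ q ∈ S1, f (2*n - q.1, q.2) (hatJ n J (2*n - q.1, q.2))
      = f (2*n - q.1, q.2) (J q) := by
    intro q hq
    have h1 := hmemS1 q hq
    have hq1 : (2*n - (2*n - q.1), q.2) = q := Prod.ext (by omega) rfl
    rw [hatJ_high hn J (a := 2*n - q.1) q.2 (by omega) (by omega), hq1]
  have e3 : ∀ q ∈ S2, f (n, 2*q.2) (hatJ n J (n, 2*q.2))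
      = f (n, 2*q.2) ((J q).map (fun x => 2 * x)) := by
    intro q hq
    have hq1 : ((n : ℕ), q.2) = q := Prod.ext (hmemS2 q hq).symm rfl
    rw [hatJ_mid hn J q.2, hq1]
  rw [Finset.sum_congr rfl e1, Finset.sum_congr rfl e2, Finset.sum_congr rfl e3]
  rw [Finsupp.sum, ← Finset.sum_filter_add_sum_filter_not J.support (fun q => q.1 = n)]
  rw [Finset.sum_congr rfl (g := fun q => f (n, 2*q.2) ((J q).map (fun x => 2 * x)))
    (fun q hq => if_pos (hmemS2 q hq))]
  rw [Finset.sum_congr rfl (g := fun q => f q (J q) + f (2*n - q.1, q.2) (J q))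
    (fun q hq => if_neg (Finset.mem_filter.1 hq).2)]
  rw [Finset.sum_add_distrib]
  ring

end Helpers

section Kit
variable {n : ℕ}

lemma msum_double (s : Multiset ℕ) : (s.map (fun x => 2 * x)).sum = 2 * s.sum := by
  induction s using Multiset.induction with
  | empty => simp
  | cons a s ih => simp [ih]; ring

lemma formA_two_formC (hn : 2 ≤ n) {a b : ℕ} (ha : a ≤ n - 1) (hb : b ≤ n - 1) :
    formA a b = 2 * formC n a b := by
  simp only [formA, formC]; split_ifs <;> first | (exfalso; first | omega | tauto) | norm_num

lemma formA_cross {a b : ℕ} (hc : a + 2 ≤ b) : formA a b = 0 := by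
  simp only [formA]; split_ifs <;> first | (exfalso; omega) | rfl

lemma formA_cross' {a b : ℕ} (hc : a + 2 ≤ b) : formA b a = 0 := by
  simp only [formA]; split_ifs <;> first | (exfalso; omega) | rfl

lemma formA_mirror (hn : 2 ≤ n) {a b : ℕ} (ha : a ≤ 2*n) (hb : b ≤ 2*n) :
    formA (2*n - a) (2*n - b) = formA a b := by
  simp only [formA]; split_ifs <;> first | (exfalso; omega) | rfl

lemma formA_n_formC (hn : 2 ≤ n) {a : ℕ} (ha : a ≤ n - 1) : formA a n = formC n a n := by
  simp only [formA, formC]; split_ifs <;> first | (exfalso; first | omega | tauto) | norm_num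

lemma formA_n_formC' (hn : 2 ≤ n) {a : ℕ} (ha : a ≤ n - 1) : formA n a = formC n n a := by
  simp only [formA, formC]; split_ifs <;> first | (exfalso; first | omega | tauto) | norm_num

lemma formA_nn : formA n n = 2 := by simp [formA]

lemma formC_nn : formC n n n = 2 := by simp [formC]

lemma cartanC_low (hn : 2 ≤ n) {a b : ℕ} (ha : a ≤ n - 1) (hb : b ≤ n - 1) :
    cartanC n a b = formA a b := by
  simp only [cartanC, formA, formC]; split_ifs <;> first | (exfalso; first | omega | tauto) | norm_num

lemma cartanC_an (hn : 2 ≤ n) {a : ℕ} (ha : a ≤ n - 1) : cartanC n a n = 2 * formA a n := by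
  simp only [cartanC, formA, formC]; split_ifs <;> first | (exfalso; first | omega | tauto) | norm_num

lemma cartanC_nb (hn : 2 ≤ n) {b : ℕ} (hb : b ≤ n - 1) : cartanC n n b = formA n b := by
  simp only [cartanC, formA, formC]; split_ifs <;> first | (exfalso; first | omega | tauto) | norm_num

lemma cartanC_nn : cartanC n n n = 2 := by
  simp only [cartanC, formC]; norm_num

lemma tC_n : tC n n = 1 := if_pos rfl

lemma tC_low {b : ℕ} (hb : b ≠ n) : tC n b = 2 := if_neg hb

end Kit

section Sums
variable {n : ℕ}

lemma configL_low (hn : 2 ≤ n) (L : Mat) (hL : supIn n L) {a : ℕ} (ha1 : 1 ≤ a)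
    (ha2 : a ≤ n - 1) :
    ((hatM n L).sum fun q c => if q.1 = a then (q.2 : ℚ) * c else 0)
      = L.sum fun q c => if q.1 = a then (q.2 : ℚ) * c else 0 := by
  rw [sum_hatM hn L hL _ (by intro q; simp)]
  apply Finsupp.sum_congr
  intro q hq
  obtain ⟨b, k⟩ := q
  obtain ⟨hb1, hb2, -⟩ := hL (b, k) (Finsupp.mem_support_iff.1 hq)
  dsimp only at hb1 hb2 ⊢
  split_ifs <;> first | (exfalso; omega) | ring1

lemma configL_mid (hn : 2 ≤ n) (L : Mat) (hL : supIn n L) :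
    ((hatM n L).sum fun q c => if q.1 = n then (q.2 : ℚ) * c else 0)
      = 2 * L.sum fun q c => if q.1 = n then (q.2 : ℚ) * c else 0 := by
  rw [sum_hatM hn L hL _ (by intro q; simp), Finsupp.mul_sum]
  apply Finsupp.sum_congr
  intro q hq
  obtain ⟨b, k⟩ := q
  obtain ⟨hb1, hb2, -⟩ := hL (b, k) (Finsupp.mem_support_iff.1 hq)
  dsimp only at hb1 hb2 ⊢
  split_ifs <;> first | (exfalso; omega) | (push_cast; ring1)

lemma configL_high (hn : 2 ≤ n) (L : Mat) (hL : supIn n L) {a : ℕ} (ha1 : n + 1 ≤ a)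
    (ha2 : a ≤ 2*n - 1) :
    ((hatM n L).sum fun q c => if q.1 = a then (q.2 : ℚ) * c else 0)
      = L.sum fun q c => if q.1 = 2*n - a then (q.2 : ℚ) * c else 0 := by
  rw [sum_hatM hn L hL _ (by intro q; simp)]
  apply Finsupp.sum_congr
  intro q hq
  obtain ⟨b, k⟩ := q
  obtain ⟨hb1, hb2, -⟩ := hL (b, k) (Finsupp.mem_support_iff.1 hq)
  dsimp only at hb1 hb2 ⊢
  split_ifs <;> first | (exfalso; omega) | ring1

lemma vacL_low (hn : 2 ≤ n) (L : Mat) (hL : supIn n L) {a : ℕ} (ha1 : 1 ≤ a)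
    (ha2 : a ≤ n - 1) (i : ℕ) :
    ((hatM n L).sum fun q c => if q.1 = a then ((min i q.2 : ℕ) : ℚ) * c else 0)
      = L.sum fun q c => if q.1 = a then ((min i q.2 : ℕ) : ℚ) * c else 0 := by
  rw [sum_hatM hn L hL _ (by intro q; simp)]
  apply Finsupp.sum_congr
  intro q hq
  obtain ⟨b, k⟩ := q
  obtain ⟨hb1, hb2, -⟩ := hL (b, k) (Finsupp.mem_support_iff.1 hq)
  dsimp only at hb1 hb2 ⊢
  split_ifs <;> first | (exfalso; omega) | ring1

lemma vacL_mid (hn : 2 ≤ n) (L : Mat) (hL : supIn n L) (i : ℕ) :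
    ((hatM n L).sum fun q c => if q.1 = n then ((min (2*i) q.2 : ℕ) : ℚ) * c else 0)
      = 2 * L.sum fun q c => if q.1 = n then ((min i q.2 : ℕ) : ℚ) * c else 0 := by
  rw [sum_hatM hn L hL _ (by intro q; simp), Finsupp.mul_sum]
  apply Finsupp.sum_congr
  intro q hq
  obtain ⟨b, k⟩ := q
  obtain ⟨hb1, hb2, -⟩ := hL (b, k) (Finsupp.mem_support_iff.1 hq)
  dsimp only at hb1 hb2 ⊢
  split_ifs <;>
    first
      | (exfalso; omega)
      | ring1
      | (rw [show min (2*i) (2*k) = 2 * min i k from by omega]; push_cast; ring)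

lemma vacL_high (hn : 2 ≤ n) (L : Mat) (hL : supIn n L) {a : ℕ} (ha1 : n + 1 ≤ a)
    (ha2 : a ≤ 2*n - 1) (i : ℕ) :
    ((hatM n L).sum fun q c => if q.1 = a then ((min i q.2 : ℕ) : ℚ) * c else 0)
      = L.sum fun q c => if q.1 = 2*n - a then ((min i q.2 : ℕ) : ℚ) * c else 0 := by
  rw [sum_hatM hn L hL _ (by intro q; simp)]
  apply Finsupp.sum_congr
  intro q hq
  obtain ⟨b, k⟩ := q
  obtain ⟨hb1, hb2, -⟩ := hL (b, k) (Finsupp.mem_support_iff.1 hq)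
  dsimp only at hb1 hb2 ⊢
  split_ifs <;> first | (exfalso; omega) | ring1

lemma configM_low (hn : 2 ≤ n) (m : Mat) (hm : supIn n m) {a : ℕ} (ha1 : 1 ≤ a)
    (ha2 : a ≤ n - 1) :
    ((hatM n m).sum fun q c => (q.2 : ℚ) * c * formA a q.1)
      = m.sum fun q c => (q.2 : ℚ) * c * cartanC n a q.1 := by
  rw [sum_hatM hn m hm _ (by intro q; simp)]
  apply Finsupp.sum_congr
  intro q hq
  obtain ⟨b, k⟩ := q
  obtain ⟨hb1, hb2, -⟩ := hm (b, k) (Finsupp.mem_support_iff.1 hq)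
  dsimp only at hb1 hb2 ⊢
  by_cases hbn : b = n
  · rw [if_pos hbn, hbn, cartanC_an hn ha2]
    push_cast; ring
  · rw [if_neg hbn, cartanC_low hn ha2 (by omega),
      formA_cross (show a + 2 ≤ 2*n - b from by omega)]
    ring

lemma configM_mid (hn : 2 ≤ n) (m : Mat) (hm : supIn n m) :
    ((hatM n m).sum fun q c => (q.2 : ℚ) * c * formA n q.1)
      = 2 * m.sum fun q c => (q.2 : ℚ) * c * cartanC n n q.1 := by
  rw [sum_hatM hn m hm _ (by intro q; simp), Finsupp.mul_sum]
  apply Finsupp.sum_congr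
  intro q hq
  obtain ⟨b, k⟩ := q
  obtain ⟨hb1, hb2, -⟩ := hm (b, k) (Finsupp.mem_support_iff.1 hq)
  dsimp only at hb1 hb2 ⊢
  by_cases hbn : b = n
  · rw [if_pos hbn, hbn, formA_nn, cartanC_nn]
    push_cast; ring
  · rw [if_neg hbn, cartanC_nb hn (by omega)]
    have h2 : formA n (2*n - b) = formA n b := by
      have := formA_mirror hn (a := n) (b := b) (by omega) (by omega)
      rwa [show 2*n - n = n from by omega] at this
    rw [h2]; ring

lemma configM_high (hn : 2 ≤ n) (m : Mat) (hm : supIn n m) {a : ℕ} (ha1 : n + 1 ≤ a)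
    (ha2 : a ≤ 2*n - 1) :
    ((hatM n m).sum fun q c => (q.2 : ℚ) * c * formA a q.1)
      = m.sum fun q c => (q.2 : ℚ) * c * cartanC n (2*n - a) q.1 := by
  rw [sum_hatM hn m hm _ (by intro q; simp)]
  apply Finsupp.sum_congr
  intro q hq
  obtain ⟨b, k⟩ := q
  obtain ⟨hb1, hb2, -⟩ := hm (b, k) (Finsupp.mem_support_iff.1 hq)
  dsimp only at hb1 hb2 ⊢
  by_cases hbn : b = n
  · have h2 : formA a n = formA (2*n - a) n := by
      have := formA_mirror hn (a := a) (b := n) (by omega) (by omega)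
      rw [show 2*n - n = n from by omega] at this
      rw [← this]
    rw [if_pos hbn, hbn, h2, cartanC_an hn (by omega)]
    push_cast; ring
  · rw [if_neg hbn, cartanC_low hn (by omega) (by omega),
      formA_cross' (show b + 2 ≤ a from by omega)]
    have h2 : formA a (2*n - b) = formA (2*n - a) b := by
      have := formA_mirror hn (a := 2*n - a) (b := b) (by omega) (by omega)
      rwa [show 2*n - (2*n - a) = a from by omega] at this
    rw [h2]; ring

lemma vacM_low (hn : 2 ≤ n) (m : Mat) (hm : supIn n m) {a : ℕ} (ha1 : 1 ≤ a)
    (ha2 : a ≤ n - 1) (i : ℕ) :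
    ((hatM n m).sum fun q c => formA a q.1 * ((min i q.2 : ℕ) : ℚ) * c)
      = m.sum fun q c => formC n a q.1 * ((min (tC n q.1 * i) (tC n a * q.2) : ℕ) : ℚ) * c := by
  rw [sum_hatM hn m hm _ (by intro q; simp)]
  apply Finsupp.sum_congr
  intro q hq
  obtain ⟨b, k⟩ := q
  obtain ⟨hb1, hb2, -⟩ := hm (b, k) (Finsupp.mem_support_iff.1 hq)
  dsimp only at hb1 hb2 ⊢
  by_cases hbn : b = n
  · rw [if_pos hbn, hbn, tC_n, tC_low (show a ≠ n from by omega), one_mul,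
      formA_n_formC hn ha2]
  · rw [if_neg hbn, tC_low hbn, tC_low (show a ≠ n from by omega),
      show min (2*i) (2*k) = 2 * min i k from by omega,
      formA_cross (show a + 2 ≤ 2*n - b from by omega),
      formA_two_formC hn ha2 (by omega)]
    push_cast; ring

lemma vacM_mid (hn : 2 ≤ n) (m : Mat) (hm : supIn n m) (i : ℕ) :
    ((hatM n m).sum fun q c => formA n q.1 * ((min (2*i) q.2 : ℕ) : ℚ) * c)
      = 2 * m.sum fun q c =>
          formC n n q.1 * ((min (tC n q.1 * i) (tC n n * q.2) : ℕ) : ℚ) * c := by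
  rw [sum_hatM hn m hm _ (by intro q; simp), Finsupp.mul_sum]
  apply Finsupp.sum_congr
  intro q hq
  obtain ⟨b, k⟩ := q
  obtain ⟨hb1, hb2, -⟩ := hm (b, k) (Finsupp.mem_support_iff.1 hq)
  dsimp only at hb1 hb2 ⊢
  by_cases hbn : b = n
  · rw [if_pos hbn, hbn, tC_n, one_mul, one_mul, formA_nn, formC_nn,
      show min (2*i) (2*k) = 2 * min i k from by omega]
    push_cast; ring
  · rw [if_neg hbn, tC_low hbn, tC_n, one_mul]
    have h2 : formA n (2*n - b) = formA n b := by
      have := formA_mirror hn (a := n) (b := b) (by omega) (by omega)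
      rwa [show 2*n - n = n from by omega] at this
    rw [h2, formA_n_formC' hn (by omega)]
    ring

lemma vacM_high (hn : 2 ≤ n) (m : Mat) (hm : supIn n m) {a : ℕ} (ha1 : n + 1 ≤ a)
    (ha2 : a ≤ 2*n - 1) (i : ℕ) :
    ((hatM n m).sum fun q c => formA a q.1 * ((min i q.2 : ℕ) : ℚ) * c)
      = m.sum fun q c =>
          formC n (2*n - a) q.1 * ((min (tC n q.1 * i) (tC n (2*n - a) * q.2) : ℕ) : ℚ) * c := by
  rw [sum_hatM hn m hm _ (by intro q; simp)]
  apply Finsupp.sum_congr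
  intro q hq
  obtain ⟨b, k⟩ := q
  obtain ⟨hb1, hb2, -⟩ := hm (b, k) (Finsupp.mem_support_iff.1 hq)
  dsimp only at hb1 hb2 ⊢
  by_cases hbn : b = n
  · have h2 : formA a n = formA (2*n - a) n := by
      have := formA_mirror hn (a := a) (b := n) (by omega) (by omega)
      rw [show 2*n - n = n from by omega] at this
      rw [← this]
    rw [if_pos hbn, hbn, tC_n, tC_low (show 2*n - a ≠ n from by omega), one_mul, h2,
      formA_n_formC hn (by omega)]
  · rw [if_neg hbn, tC_low hbn, tC_low (show 2*n - a ≠ n from by omega),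
      show min (2*i) (2*k) = 2 * min i k from by omega,
      formA_cross' (show b + 2 ≤ a from by omega)]
    have h2 : formA a (2*n - b) = formA (2*n - a) b := by
      have := formA_mirror hn (a := 2*n - a) (b := b) (by omega) (by omega)
      rwa [show 2*n - (2*n - a) = a from by omega] at this
    rw [h2, formA_two_formC hn (by omega) (by omega)]
    push_cast; ring

lemma vac_low (hn : 2 ≤ n) (L m : Mat) (hL : supIn n L) (hm : supIn n m) {a : ℕ}
    (ha1 : 1 ≤ a) (ha2 : a ≤ n - 1) (i : ℕ) :
    vacA (hatM n L) (hatM n m) a i = vacC n L m a i := by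
  unfold vacA vacC
  rw [vacL_low hn L hL ha1 ha2 i, vacM_low hn m hm ha1 ha2 i]

lemma vac_mid (hn : 2 ≤ n) (L m : Mat) (hL : supIn n L) (hm : supIn n m) (i : ℕ) :
    vacA (hatM n L) (hatM n m) n (2*i) = 2 * vacC n L m n i := by
  unfold vacA vacC
  rw [vacL_mid hn L hL i, vacM_mid hn m hm i]
  ring

lemma vac_high (hn : 2 ≤ n) (L m : Mat) (hL : supIn n L) (hm : supIn n m) {a : ℕ}
    (ha1 : n + 1 ≤ a) (ha2 : a ≤ 2*n - 1) (i : ℕ) :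
    vacA (hatM n L) (hatM n m) a i = vacC n L m (2*n - a) i := by
  unfold vacA vacC
  rw [vacL_high hn L hL ha1 ha2 i, vacM_high hn m hm ha1 ha2 i]

end Sums

section Concave
variable {n : ℕ}

lemma vacA_zero (L' m' : Mat) (a : ℕ) : vacA L' m' a 0 = 0 := by
  unfold vacA
  rw [show (L'.sum fun q c => if q.1 = a then ((min 0 q.2 : ℕ) : ℚ) * c else 0)
      = L'.sum fun _ _ => (0 : ℚ) from Finsupp.sum_congr (by intro q hq; simp),
    show (m'.sum fun q c => formA a q.1 * ((min 0 q.2 : ℕ) : ℚ) * c)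
      = m'.sum fun _ _ => (0 : ℚ) from Finsupp.sum_congr (by intro q hq; simp)]
  simp [Finsupp.sum]

lemma vacA_secondDiff (L' m' : Mat) (a j : ℕ) (hj : 1 ≤ j) :
    vacA L' m' a (j+1) + vacA L' m' a (j-1) - 2 * vacA L' m' a j
      = - (L'.sum fun q c => if q.1 = a ∧ q.2 = j then (c : ℚ) else 0)
        + (m'.sum fun q c => if q.2 = j then formA a q.1 * c else 0) := by
  have hL : (L'.sum fun q c =>
        (if q.1 = a then ((min (j+1) q.2 : ℕ) : ℚ) * c else 0)
        + ((if q.1 = a then ((min (j-1) q.2 : ℕ) : ℚ) * c else 0)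
          + (if q.1 = a ∧ q.2 = j then (c : ℚ) else 0)))
      = L'.sum fun q c =>
        (if q.1 = a then ((min j q.2 : ℕ) : ℚ) * c else 0)
        + (if q.1 = a then ((min j q.2 : ℕ) : ℚ) * c else 0) := by
    apply Finsupp.sum_congr
    intro q hq
    obtain ⟨b, k⟩ := q
    dsimp only
    by_cases h1 : b = a
    · rw [if_pos h1, if_pos h1, if_pos h1]
      by_cases h2 : k = j
      · rw [if_pos ⟨h1, h2⟩]
        have hnat : ((min (j+1) k : ℕ) : ℚ) + ((min (j-1) k : ℕ) : ℚ) + 1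
            = ((min j k : ℕ) : ℚ) + ((min j k : ℕ) : ℚ) := by
          exact_mod_cast congrArg (Nat.cast (R := ℚ))
            (by omega : min (j+1) k + min (j-1) k + 1 = min j k + min j k)
        linear_combination (L' (b, k) : ℚ) * hnat
      · rw [if_neg (by tauto)]
        have hnat : ((min (j+1) k : ℕ) : ℚ) + ((min (j-1) k : ℕ) : ℚ)
            = ((min j k : ℕ) : ℚ) + ((min j k : ℕ) : ℚ) := by
          exact_mod_cast congrArg (Nat.cast (R := ℚ))
            (by omega : min (j+1) k + min (j-1) k = min j k + min j k)
        linear_combination (L' (b, k) : ℚ) * hnat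
    · rw [if_neg h1, if_neg h1, if_neg h1, if_neg (by tauto)]
      ring
  have hm : (m'.sum fun q c =>
        (formA a q.1 * ((min (j+1) q.2 : ℕ) : ℚ) * c)
        + ((formA a q.1 * ((min (j-1) q.2 : ℕ) : ℚ) * c)
          + (if q.2 = j then formA a q.1 * c else 0)))
      = m'.sum fun q c =>
        (formA a q.1 * ((min j q.2 : ℕ) : ℚ) * c)
        + (formA a q.1 * ((min j q.2 : ℕ) : ℚ) * c) := by
    apply Finsupp.sum_congr
    intro q hq
    obtain ⟨b, k⟩ := q
    dsimp only
    by_cases h2 : k = j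
    · rw [if_pos h2]
      have hnat : ((min (j+1) k : ℕ) : ℚ) + ((min (j-1) k : ℕ) : ℚ) + 1
          = ((min j k : ℕ) : ℚ) + ((min j k : ℕ) : ℚ) := by
        exact_mod_cast congrArg (Nat.cast (R := ℚ))
          (by omega : min (j+1) k + min (j-1) k + 1 = min j k + min j k)
      linear_combination (formA a b * (m' (b, k) : ℚ)) * hnat
    · rw [if_neg h2]
      have hnat : ((min (j+1) k : ℕ) : ℚ) + ((min (j-1) k : ℕ) : ℚ)
          = ((min j k : ℕ) : ℚ) + ((min j k : ℕ) : ℚ) := by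
        exact_mod_cast congrArg (Nat.cast (R := ℚ))
          (by omega : min (j+1) k + min (j-1) k = min j k + min j k)
      linear_combination (formA a b * (m' (b, k) : ℚ)) * hnat
  rw [Finsupp.sum_add, Finsupp.sum_add, Finsupp.sum_add] at hL
  rw [Finsupp.sum_add, Finsupp.sum_add, Finsupp.sum_add] at hm
  unfold vacA
  linarith [hL, hm]

lemma vacA_odd_nonneg (hn : 2 ≤ n) (L m : Mat) (hL : supIn n L) (hm : supIn n m)
    {j : ℕ} (hj : j % 2 = 1)
    (heven : ∀ i, 1 ≤ i → 0 ≤ vacA (hatM n L) (hatM n m) n (2*i)) :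
    0 ≤ vacA (hatM n L) (hatM n m) n j := by
  have hsd := vacA_secondDiff (hatM n L) (hatM n m) n j (by omega)
  have hLz : ((hatM n L).sum fun q c => if q.1 = n ∧ q.2 = j then (c : ℚ) else 0) = 0 := by
    rw [Finsupp.sum]
    refine Finset.sum_eq_zero ?_
    intro q hq
    have hne := Finsupp.mem_support_iff.1 hq
    rw [if_neg]
    rintro ⟨h1, h2⟩
    exact hne (by rw [show q = ((n : ℕ), j) from Prod.ext h1 h2, hatM_midodd hn L hj])
  have hmz : ((hatM n m).sum fun q c => if q.2 = j then formA n q.1 * c else 0) ≤ 0 := by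
    rw [Finsupp.sum]
    refine Finset.sum_nonpos ?_
    intro q hq
    have hne := Finsupp.mem_support_iff.1 hq
    split_ifs with h2
    · have hq1 : q.1 ≠ n := by
        intro h1
        exact hne (by rw [show q = ((n : ℕ), j) from Prod.ext h1 h2, hatM_midodd hn m hj])
      have hA : formA n q.1 ≤ 0 := by
        simp only [formA]
        split_ifs with u1 u2
        · exact absurd u1.symm hq1
        · norm_num
        · exact le_refl 0
      exact mul_nonpos_iff.2 (Or.inr ⟨hA, by positivity⟩)
    · exact le_refl 0
  have h1 : 0 ≤ vacA (hatM n L) (hatM n m) n (j+1) := by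
    have := heven ((j+1)/2) (by omega)
    rwa [show 2*((j+1)/2) = j+1 from by omega] at this
  have h0 : 0 ≤ vacA (hatM n L) (hatM n m) n (j-1) := by
    by_cases hj1 : j = 1
    · rw [hj1, show (1:ℕ) - 1 = 0 from rfl, vacA_zero]
    · have := heven ((j-1)/2) (by omega)
      rwa [show 2*((j-1)/2) = j-1 from by omega] at this
  rw [hLz] at hsd
  linarith [hsd, hmz, h1, h0]

end Concave

section CC
variable {n : ℕ}

lemma Jsize_double (hn : 2 ≤ n) (J : Rig) (hJ : supInJ n J) :
    Jsize (hatJ n J) = 2 * Jsize J := by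
  unfold Jsize
  rw [sum_hatJ hn J hJ _ (by intro q; simp), Finsupp.sum, Finsupp.sum, Finset.mul_sum]
  apply Finset.sum_congr rfl
  intro q hq
  obtain ⟨b, k⟩ := q
  dsimp only
  by_cases hbn : b = n
  · rw [if_pos hbn, msum_double]
    push_cast; ring
  · rw [if_neg hbn]
    push_cast; ring

lemma cc_double (hn : 2 ≤ n) (m : Mat) (hm : supIn n m) :
    ccA (hatM n m) = 2 * ccC n m := by
  unfold ccA ccC
  rw [sum_hatM hn m hm _ (by intro q; simp [Finsupp.sum])]
  have base : ∀ (X Y : ℚ), X = 2 * Y → (1/2 : ℚ) * X = 2 * ((1/2) * Y) := by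
    intro X Y h; rw [h]; ring
  apply base
  rw [Finsupp.mul_sum]
  apply Finsupp.sum_congr
  intro q hq
  obtain ⟨a, j⟩ := q
  obtain ⟨ha1, ha2, -⟩ := hm (a, j) (Finsupp.mem_support_iff.1 hq)
  dsimp only at ha1 ha2 ⊢
  by_cases han : a = n
  · rw [if_pos han, han, sum_hatM hn m hm _ (by intro r; simp), Finsupp.mul_sum]
    apply Finsupp.sum_congr
    intro r hr
    obtain ⟨b, k⟩ := r
    obtain ⟨hb1, hb2, -⟩ := hm (b, k) (Finsupp.mem_support_iff.1 hr)
    dsimp only at hb1 hb2 ⊢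
    by_cases hbn : b = n
    · rw [if_pos hbn, hbn, tC_n, one_mul, one_mul, formA_nn, formC_nn,
        show min (2*j) (2*k) = 2 * min j k from by omega]
      push_cast; ring
    · rw [if_neg hbn, tC_low hbn, tC_n, one_mul]
      have h2 : formA n (2*n - b) = formA n b := by
        have := formA_mirror hn (a := n) (b := b) (by omega) (by omega)
        rwa [show 2*n - n = n from by omega] at this
      rw [h2, formA_n_formC' hn (by omega)]
      ring
  · rw [if_neg han, sum_hatM hn m hm _ (by intro r; simp),
      sum_hatM hn m hm _ (by intro r; simp), ← Finsupp.sum_add, Finsupp.mul_sum]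
    apply Finsupp.sum_congr
    intro r hr
    obtain ⟨b, k⟩ := r
    obtain ⟨hb1, hb2, -⟩ := hm (b, k) (Finsupp.mem_support_iff.1 hr)
    dsimp only at hb1 hb2 ⊢
    by_cases hbn : b = n
    · rw [if_pos hbn, if_pos hbn, hbn, tC_n, tC_low (show a ≠ n from han), one_mul]
      have h2 : formA (2*n - a) n = formA a n := by
        have := formA_mirror hn (a := a) (b := n) (by omega) (by omega)
        rwa [show 2*n - n = n from by omega] at this
      rw [h2, formA_n_formC hn (by omega)]
      ring
    · rw [if_neg hbn, if_neg hbn, tC_low hbn, tC_low (show a ≠ n from han),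
        show min (2*j) (2*k) = 2 * min j k from by omega,
        formA_cross (show a + 2 ≤ 2*n - b from by omega),
        formA_cross' (show b + 2 ≤ 2*n - a from by omega),
        formA_mirror hn (a := a) (b := b) (by omega) (by omega),
        formA_two_formC hn (by omega) (by omega)]
      push_cast; ring

end CC

/-- Inverse transform on matrices. -/
noncomputable def unM (n : ℕ) (m' : Mat) : Mat :=
  Finsupp.onFinset
    (Finset.range (m'.support.sup Prod.fst + 1) ×ˢ Finset.range (m'.support.sup Prod.snd + 1))
    (fun q => if q.1 = n then m' (n, 2*q.2) else if 1 ≤ q.1 ∧ q.1 ≤ n - 1 then m' q else 0)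
    (by
      intro q hq
      simp only [Finset.mem_product, Finset.mem_range]
      split_ifs at hq with h1 h2
      · have hs : ((n, 2*q.2) : ℕ × ℕ) ∈ m'.support := Finsupp.mem_support_iff.2 hq
        have f1 := Finset.le_sup (f := Prod.fst) hs
        have f2 := Finset.le_sup (f := Prod.snd) hs
        dsimp only at f1 f2
        omega
      · have hs : q ∈ m'.support := Finsupp.mem_support_iff.2 hq
        have f1 := Finset.le_sup (f := Prod.fst) hs
        have f2 := Finset.le_sup (f := Prod.snd) hs
        omega
      · exact absurd rfl hq)

/-- Inverse transform on riggings. -/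
noncomputable def unJ (n : ℕ) (J' : Rig) : Rig :=
  Finsupp.onFinset
    (Finset.range (J'.support.sup Prod.fst + 1) ×ˢ Finset.range (J'.support.sup Prod.snd + 1))
    (fun q => if q.1 = n then (J' (n, 2*q.2)).map (fun x => x / 2)
      else if 1 ≤ q.1 ∧ q.1 ≤ n - 1 then J' q else 0)
    (by
      intro q hq
      simp only [Finset.mem_product, Finset.mem_range]
      split_ifs at hq with h1 h2
      · rw [Ne, Multiset.map_eq_zero] at hq
        have hs : ((n, 2*q.2) : ℕ × ℕ) ∈ J'.support := Finsupp.mem_support_iff.2 hq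
        have f1 := Finset.le_sup (f := Prod.fst) hs
        have f2 := Finset.le_sup (f := Prod.snd) hs
        dsimp only at f1 f2
        omega
      · have hs : q ∈ J'.support := Finsupp.mem_support_iff.2 hq
        have f1 := Finset.le_sup (f := Prod.fst) hs
        have f2 := Finset.le_sup (f := Prod.snd) hs
        omega
      · exact absurd rfl hq)

section Inv
variable {n : ℕ}

lemma unM_apply (m' : Mat) (q : ℕ × ℕ) :
    unM n m' q = (if q.1 = n then m' (n, 2*q.2)
      else if 1 ≤ q.1 ∧ q.1 ≤ n - 1 then m' q else 0) := rfl

lemma unJ_apply (J' : Rig) (q : ℕ × ℕ) :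
    unJ n J' q = (if q.1 = n then (J' (n, 2*q.2)).map (fun x => x / 2)
      else if 1 ≤ q.1 ∧ q.1 ≤ n - 1 then J' q else 0) := rfl

lemma supIn_unM (hn : 2 ≤ n) (m' : Mat) (hs : supIn (2*n-1) m') : supIn n (unM n m') := by
  intro q hq
  rw [unM_apply] at hq
  split_ifs at hq with h1 h2
  · obtain ⟨-, -, g3⟩ := hs (n, 2*q.2) hq
    dsimp only at g3
    exact ⟨by omega, by omega, by omega⟩
  · obtain ⟨-, -, g3⟩ := hs q hq
    exact ⟨h2.1, by omega, g3⟩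
  · exact absurd rfl hq

lemma supInJ_unJ (hn : 2 ≤ n) (J' : Rig) (hs : supInJ (2*n-1) J') : supInJ n (unJ n J') := by
  intro q hq
  rw [unJ_apply] at hq
  split_ifs at hq with h1 h2
  · rw [Ne, Multiset.map_eq_zero] at hq
    obtain ⟨-, -, g3⟩ := hs (n, 2*q.2) hq
    dsimp only at g3
    exact ⟨by omega, by omega, by omega⟩
  · obtain ⟨-, -, g3⟩ := hs q hq
    exact ⟨h2.1, by omega, g3⟩
  · exact absurd rfl hq

lemma hatM_unM (hn : 2 ≤ n) (m' : Mat) (hs : supIn (2*n-1) m')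
    (hsym : ∀ a i, 1 ≤ a → a ≤ n - 1 → m' (a, i) = m' (2*n - a, i))
    (hodd : ∀ j, j % 2 = 1 → m' (n, j) = 0) :
    hatM n (unM n m') = m' := by
  ext q
  obtain ⟨a, i⟩ := q
  rw [hatM_apply]
  dsimp only
  split_ifs with h1 h2 h3
  · rw [unM_apply]
    dsimp only
    rw [if_neg (by omega), if_pos h1]
  · rw [unM_apply]
    dsimp only
    rw [if_pos rfl, show 2*(i/2) = i from by omega, h2.1]
  · have e := hsym (2*n - a) i (by omega) (by omega)
    rw [show 2*n - (2*n - a) = a from by omega] at e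
    rw [unM_apply]
    dsimp only
    rw [if_neg (by omega), if_pos ⟨by omega, by omega⟩, e]
  · by_cases han : a = n
    · rw [han]
      exact (hodd i (by omega)).symm
    · rcases eq_or_ne (m' (a, i)) 0 with hz | hz
      · exact hz.symm
      · exfalso
        obtain ⟨g1, g2, -⟩ := hs (a, i) hz
        dsimp only at g1 g2
        omega

lemma hatJ_unJ (hn : 2 ≤ n) (J' : Rig) (hs : supInJ (2*n-1) J')
    (hsym : ∀ a i, 1 ≤ a → a ≤ n - 1 → J' (a, i) = J' (2*n - a, i))
    (hoddJ : ∀ j, j % 2 = 1 → J' (n, j) = 0)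
    (hev : ∀ i, ∀ x ∈ J' (n, i), x % 2 = 0) :
    hatJ n (unJ n J') = J' := by
  refine Finsupp.ext fun q => ?_
  obtain ⟨a, i⟩ := q
  rw [hatJ_apply]
  dsimp only
  split_ifs with h1 h2 h3
  · rw [unJ_apply]
    dsimp only
    rw [if_neg (by omega), if_pos h1]
  · rw [unJ_apply]
    dsimp only
    rw [if_pos rfl, show 2*(i/2) = i from by omega, Multiset.map_map]
    have hc : ((J' (n, i)).map ((fun x => 2*x) ∘ (fun x => x / 2)))
        = (J' (n, i)).map (fun x => x) :=
      Multiset.map_congr rfl (fun x hx => by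
        have := hev i x hx
        simp only [Function.comp_apply]
        omega)
    rw [hc, Multiset.map_id', h2.1]
  · have e := hsym (2*n - a) i (by omega) (by omega)
    rw [show 2*n - (2*n - a) = a from by omega] at e
    rw [unJ_apply]
    dsimp only
    rw [if_neg (by omega), if_pos ⟨by omega, by omega⟩, e]
  · by_cases han : a = n
    · rw [han]
      exact (hoddJ i (by omega)).symm
    · rcases eq_or_ne (J' (a, i)) 0 with hz | hz
      · exact hz.symm
      · exfalso
        obtain ⟨g1, g2, -⟩ := hs (a, i) hz
        dsimp only at g1 g2
        omega

end Inv


theorem statement15 (n : ℕ) (hn : 2 ≤ n) (lam : ℕ → ℕ) (L : Mat) (hL : supIn n L) :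
    Set.BijOn (fun p : Mat × Rig => (hatM n p.1, hatJ n p.2)) (RCC n lam L)
      (RCv n lam L) ∧
    ∀ p ∈ RCC n lam L,
      ccA (hatM n p.1) + Jsize (hatJ n p.2) = 2 * (ccC n p.1 + Jsize p.2) := by
  classical
  constructor
  · refine ⟨?_, ?_, ?_⟩
    · -- MapsTo
      rintro ⟨m, J⟩ ⟨hsm, hsJ, hconf, hadm, hrig⟩
      refine ⟨?_, ?_, ?_, ?_, ?_, ?_, ?_, ?_⟩
      · -- supIn
        rintro ⟨a, i⟩ hq
        rw [hatM_apply] at hq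
        dsimp only at hq ⊢
        split_ifs at hq with h1 h2 h3
        · obtain ⟨g1, g2, g3⟩ := hsm (a, i) hq
          exact ⟨by omega, by omega, g3⟩
        · obtain ⟨g1, g2, g3⟩ := hsm (n, i/2) hq
          dsimp only at g3
          exact ⟨by omega, by omega, by omega⟩
        · obtain ⟨g1, g2, g3⟩ := hsm (2*n - a, i) hq
          exact ⟨by omega, by omega, g3⟩
        · exact absurd rfl hq
      · -- supInJ
        rintro ⟨a, i⟩ hq
        rw [hatJ_apply] at hq
        dsimp only at hq ⊢
        split_ifs at hq with h1 h2 h3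
        · obtain ⟨g1, g2, g3⟩ := hsJ (a, i) hq
          exact ⟨by omega, by omega, g3⟩
        · rw [Ne, Multiset.map_eq_zero] at hq
          obtain ⟨g1, g2, g3⟩ := hsJ (n, i/2) hq
          dsimp only at g3
          exact ⟨by omega, by omega, by omega⟩
        · obtain ⟨g1, g2, g3⟩ := hsJ (2*n - a, i) hq
          exact ⟨by omega, by omega, g3⟩
        · exact absurd rfl hq
      · -- configA
        intro a ha1 ha2
        by_cases hle : a ≤ n - 1
        · rw [configM_low hn m hsm ha1 hle, configL_low hn L hL ha1 hle,
            show hatLam n lam a = (lam a : ℚ) from by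
              unfold hatLam; rw [if_pos ⟨ha1, hle⟩]]
          exact hconf a ha1 (by omega)
        · by_cases han : a = n
          · subst han
            rw [configM_mid hn m hsm, configL_mid hn L hL,
              show hatLam a lam a = 2 * (lam a : ℚ) from by
                unfold hatLam; rw [if_neg (by omega), if_pos rfl]]
            have := hconf a ha1 (le_refl a)
            linarith
          · rw [configM_high hn m hsm (by omega) ha2, configL_high hn L hL (by omega) ha2,
              show hatLam n lam a = (lam (2*n - a) : ℚ) from by
                unfold hatLam; rw [if_neg (by omega), if_neg han, if_pos ⟨by omega, ha2⟩]]
            exact hconf (2*n - a) (by omega) (by omega)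
      · -- admA
        intro a i ha1 ha2 hi
        by_cases hle : a ≤ n - 1
        · rw [vac_low hn L m hL hsm ha1 hle i]
          exact hadm a i ha1 (by omega) hi
        · by_cases han : a = n
          · subst han
            by_cases hpar : i % 2 = 0
            · rw [show i = 2 * (i/2) from by omega, vac_mid hn L m hL hsm (i/2)]
              have := hadm a (i/2) (by omega) (le_refl a) (by omega)
              linarith
            · exact vacA_odd_nonneg hn L m hL hsm (by omega) (fun i' hi' => by
                rw [vac_mid hn L m hL hsm i']
                have := hadm a i' (by omega) (le_refl a) hi'
                linarith)
          · rw [vac_high hn L m hL hsm (by omega) ha2 i]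
            exact hadm (2*n - a) i (by omega) (by omega) hi
      · -- rigA
        intro a i ha1 ha2 hi
        by_cases hle : a ≤ n - 1
        · rw [hatJ_low J i ha1 hle, hatM_low m i ha1 hle,
            vac_low hn L m hL hsm ha1 hle i]
          exact hrig a i ha1 (by omega) hi
        · by_cases han : a = n
          · subst han
            by_cases hpar : i % 2 = 0
            · rw [show i = 2 * (i/2) from by omega, hatJ_mid hn J (i/2),
                hatM_mid hn m (i/2), vac_mid hn L m hL hsm (i/2)]
              obtain ⟨hc, hb⟩ := hrig a (i/2) (by omega) (le_refl a) (by omega)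
              refine ⟨by rw [Multiset.card_map]; exact hc, ?_⟩
              intro x hx
              obtain ⟨y, hy, rfl⟩ := Multiset.mem_map.1 hx
              obtain ⟨hy1, hy2⟩ := hb y hy
              exact ⟨by omega, by push_cast; linarith⟩
            · rw [hatJ_midodd hn J (by omega), hatM_midodd hn m (by omega)]
              refine ⟨by simp, ?_⟩
              intro x hx
              simp at hx
          · rw [hatJ_high hn J i (by omega) ha2, hatM_high hn m i (by omega) ha2,
              vac_high hn L m hL hsm (by omega) ha2 i]
            exact hrig (2*n - a) i (by omega) (by omega) hi
      · -- symmetry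
        intro a i ha1 ha2
        constructor
        · rw [hatM_low m i ha1 ha2, hatM_high hn m i (by omega) (by omega),
            show 2*n - (2*n - a) = a from by omega]
        · rw [hatJ_low J i ha1 ha2, hatJ_high hn J i (by omega) (by omega),
            show 2*n - (2*n - a) = a from by omega]
      · -- odd middle rows vanish
        intro j hj
        exact hatM_midodd hn m hj
      · -- middle riggings even
        intro i x hx
        rw [hatJ_apply] at hx
        dsimp only at hx
        split_ifs at hx with h1 h2 h3
        · omega
        · obtain ⟨y, hy, rfl⟩ := Multiset.mem_map.1 hx
          omega
        · omega
        · simp at hx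
    · -- InjOn
      rintro ⟨m, J⟩ ⟨hsm, hsJ, -, -, -⟩ ⟨m', J'⟩ ⟨hsm', hsJ', -, -, -⟩ heq
      simp only [Prod.mk.injEq] at heq
      obtain ⟨h1, h2⟩ := heq
      rw [Prod.mk.injEq]
      constructor
      · ext q
        obtain ⟨a, i⟩ := q
        by_cases hle : 1 ≤ a ∧ a ≤ n - 1
        · have e := DFunLike.congr_fun h1 ((a : ℕ), i)
          rwa [hatM_low m i hle.1 hle.2, hatM_low m' i hle.1 hle.2] at e
        · by_cases han : a = n
          · have e := DFunLike.congr_fun h1 ((n : ℕ), 2*i)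
            rw [hatM_mid hn m i, hatM_mid hn m' i] at e
            rw [han]
            exact e
          · have hz : m (a, i) = 0 := by
              by_contra hc
              obtain ⟨g1, g2, -⟩ := hsm (a, i) hc
              omega
            have hz' : m' (a, i) = 0 := by
              by_contra hc
              obtain ⟨g1, g2, -⟩ := hsm' (a, i) hc
              omega
            rw [hz, hz']
      · refine Finsupp.ext fun q => ?_
        obtain ⟨a, i⟩ := q
        by_cases hle : 1 ≤ a ∧ a ≤ n - 1
        · have e := DFunLike.congr_fun h2 ((a : ℕ), i)
          rwa [hatJ_low J i hle.1 hle.2, hatJ_low J' i hle.1 hle.2] at e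
        · by_cases han : a = n
          · have e := DFunLike.congr_fun h2 ((n : ℕ), 2*i)
            rw [hatJ_mid hn J i, hatJ_mid hn J' i] at e
            rw [han]
            exact Multiset.map_injective (f := fun x : ℕ => 2 * x)
              (fun x y h => by dsimp only at h; omega) e
          · have hz : J (a, i) = 0 := by
              by_contra hc
              obtain ⟨g1, g2, -⟩ := hsJ (a, i) hc
              omega
            have hz' : J' (a, i) = 0 := by
              by_contra hc
              obtain ⟨g1, g2, -⟩ := hsJ' (a, i) hc
              omega
            rw [hz, hz']
    · -- SurjOn
      rintro ⟨m', J'⟩ ⟨hsm', hsJ', hconf', hadm', hrig', hsym', hodd', hev'⟩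
      dsimp only at hsm' hsJ' hconf' hadm' hrig' hsym' hodd' hev'
      have hoddJ : ∀ j, j % 2 = 1 → J' (n, j) = 0 := by
        intro j hj
        have hc := (hrig' n j (by omega) (by omega) (by omega)).1
        rw [hodd' j hj] at hc
        exact Multiset.card_eq_zero.1 (by omega)
      have hsymM : ∀ a i, 1 ≤ a → a ≤ n - 1 → m' (a, i) = m' (2*n - a, i) :=
        fun a i u1 u2 => (hsym' a i u1 u2).1
      have hsymJ : ∀ a i, 1 ≤ a → a ≤ n - 1 → J' (a, i) = J' (2*n - a, i) :=
        fun a i u1 u2 => (hsym' a i u1 u2).2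
      have hM : hatM n (unM n m') = m' := hatM_unM hn m' hsm' hsymM hodd'
      have hJ : hatJ n (unJ n J') = J' := hatJ_unJ hn J' hsJ' hsymJ hoddJ hev'
      have hum : supIn n (unM n m') := supIn_unM hn m' hsm'
      have huJ : supInJ n (unJ n J') := supInJ_unJ hn J' hsJ'
      refine ⟨(unM n m', unJ n J'), ⟨hum, huJ, ?_, ?_, ?_⟩, ?_⟩
      · -- configC
        intro a ha1 ha2
        by_cases hle : a ≤ n - 1
        · have hc := hconf' a ha1 (by omega)
          rw [← hM, configM_low hn (unM n m') hum ha1 hle, configL_low hn L hL ha1 hle,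
            show hatLam n lam a = (lam a : ℚ) from by
              unfold hatLam; rw [if_pos ⟨ha1, hle⟩]] at hc
          exact hc
        · have han : a = n := by omega
          subst han
          have hc := hconf' a (by omega) (by omega)
          rw [← hM, configM_mid hn (unM a m') hum, configL_mid hn L hL,
            show hatLam a lam a = 2 * (lam a : ℚ) from by
              unfold hatLam; rw [if_neg (by omega), if_pos rfl]] at hc
          linarith
      · -- admC
        intro a i ha1 ha2 hi
        by_cases hle : a ≤ n - 1
        · have hc := hadm' a i ha1 (by omega) hi
          rwa [← hM, vac_low hn L (unM n m') hL hum ha1 hle i] at hc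
        · have han : a = n := by omega
          subst han
          have hc := hadm' a (2*i) (by omega) (by omega) (by omega)
          rw [← hM, vac_mid hn L (unM a m') hL hum i] at hc
          linarith
      · -- rigC
        intro a i ha1 ha2 hi
        by_cases hle : a ≤ n - 1
        · have hc := hrig' a i ha1 (by omega) hi
          rw [← hM, ← hJ, hatJ_low (unJ n J') i ha1 hle, hatM_low (unM n m') i ha1 hle,
            vac_low hn L (unM n m') hL hum ha1 hle i] at hc
          exact hc
        · have han : a = n := by omega
          subst han
          have hr := hrig' a (2*i) (by omega) (by omega) (by omega)
          rw [← hM, ← hJ, hatJ_mid hn (unJ a J') i, hatM_mid hn (unM a m') i,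
            vac_mid hn L (unM a m') hL hum i] at hr
          obtain ⟨hc, hb⟩ := hr
          refine ⟨by rw [Multiset.card_map] at hc; exact hc, ?_⟩
          intro x hx
          have hx2 : 2 * x ∈ (unJ a J' (a, i)).map (fun y => 2 * y) :=
            Multiset.mem_map_of_mem _ hx
          obtain ⟨h1x, h2x⟩ := hb (2*x) hx2
          exact ⟨by omega, by push_cast at h2x ⊢; linarith⟩
      · -- value
        simp only [Prod.mk.injEq]
        exact ⟨hM, hJ⟩
  · -- cocharge doubling
    rintro ⟨m, J⟩ ⟨hsm, hsJ, -, -, -⟩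
    rw [cc_double hn m hsm, Jsize_double hn J hsJ]
    ring

end Stmt15
end
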